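/- arXiv:1409.0569 — 2 statements merged into one kernel-verified Lean document; each statement's English description precedes it below -/
import Mathlib

section
/- Let (Ω, F, P) be a probability space and ζ : Ω → ℝ square-integrable with E[ζ²] = 1. If for some constants ρ, δ > 0 the entropy bound E[ζ² log(ζ²/E[ζ²])] is finite, then E[ζ²] ≤ (exp(2/(ρδ²)) + ρδ²/(2e))²·(E[|ζ|])² + (ρδ²/2)·E[ζ² log(ζ²/E[ζ²])]. (This follows from the pointwise inequality ζ² ≤ (exp(2/(ρδ²)) + ρδ²/(2e))|ζ| + (ρδ²/4)ζ² log ζ², taking expectation and applying Young's inequality to absorb E[|ζ|].) -/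
open MeasureTheory

/-- `t * log t ≥ -1/e` for `t > 0`. -/
lemma mul_log_ge_neg_inv_exp {t : ℝ} (ht : 0 < t) :
    -(Real.exp 1)⁻¹ ≤ t * Real.log t := by
  have h := Real.add_one_le_exp (-(1 + Real.log t))
  have he : Real.exp (-(1 + Real.log t)) = (Real.exp 1)⁻¹ / t := by
    rw [Real.exp_neg, Real.exp_add, Real.exp_log ht]
    field_simp
  rw [he] at h
  have hepos : (0:ℝ) < (Real.exp 1)⁻¹ := by positivity
  have := mul_le_mul_of_nonneg_right h ht.le
  have ht' : ((Real.exp 1)⁻¹ / t) * t = (Real.exp 1)⁻¹ :=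
    div_mul_cancel₀ _ ht.ne'
  nlinarith

/-- Let `(Ω, F, P)` be a probability space and `ζ` square integrable with `E[ζ²] = 1`.
If the entropy `E[ζ² log(ζ²/E[ζ²])]` is finite (integrable), then for all `ρ, δ > 0`,
`E[ζ²] ≤ (exp(2/(ρδ²)) + ρδ²/(2e))² (E|ζ|)² + (ρδ²/2) E[ζ² log(ζ²/E[ζ²])]`. -/
theorem stmt3 {Ω : Type*} [MeasurableSpace Ω] (P : Measure Ω) [IsProbabilityMeasure P]
    (ζ : Ω → ℝ) (ρ δ : ℝ) (hρ : 0 < ρ) (hδ : 0 < δ)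
    (hζ : MemLp ζ 2 P) (hnorm : ∫ ω, ζ ω ^ 2 ∂P = 1)
    (hent : Integrable (fun ω => ζ ω ^ 2 * Real.log (ζ ω ^ 2 / ∫ ω', ζ ω' ^ 2 ∂P)) P) :
    ∫ ω, ζ ω ^ 2 ∂P ≤
      (Real.exp (2 / (ρ * δ ^ 2)) + ρ * δ ^ 2 / (2 * Real.exp 1)) ^ 2 * (∫ ω, |ζ ω| ∂P) ^ 2
        + ρ * δ ^ 2 / 2 * ∫ ω, ζ ω ^ 2 * Real.log (ζ ω ^ 2 / ∫ ω', ζ ω' ^ 2 ∂P) ∂P := by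
  have hcd : (0:ℝ) < ρ * δ ^ 2 := by positivity
  have hE : (0:ℝ) < Real.exp 1 := Real.exp_pos 1
  obtain ⟨A, hA⟩ : ∃ A : ℝ, A = Real.exp (2 / (ρ * δ ^ 2)) + ρ * δ ^ 2 / (2 * Real.exp 1) :=
    ⟨_, rfl⟩
  rw [← hA]
  simp only [hnorm, div_one] at hent ⊢
  -- pointwise inequality
  have hpt : ∀ ω, ζ ω ^ 2 ≤ A * |ζ ω| + ρ * δ ^ 2 / 4 * (ζ ω ^ 2 * Real.log (ζ ω ^ 2)) := by
    intro ω
    obtain ⟨t, hts⟩ : ∃ t : ℝ, t = |ζ ω| := ⟨_, rfl⟩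
    rw [← hts]
    have ht0 : 0 ≤ t := hts ▸ abs_nonneg _
    have hsq : ζ ω ^ 2 = t ^ 2 := by rw [hts, sq_abs]
    rw [hsq]
    rcases eq_or_lt_of_le ht0 with h0 | hpos
    · simp [← h0]
    have hlog : Real.log (t ^ 2) = 2 * Real.log t := by
      rw [Real.log_pow]; push_cast; ring
    rw [hlog]
    obtain ⟨M, hM⟩ : ∃ M : ℝ, M = Real.exp (2 / (ρ * δ ^ 2)) := ⟨_, rfl⟩
    have hMpos : 0 < M := hM ▸ Real.exp_pos _
    rcases le_or_gt M t with hbig | hsmall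
    · -- t ≥ M : log t ≥ 2/(ρδ²)
      have hlt : 2 / (ρ * δ ^ 2) ≤ Real.log t :=
        (Real.le_log_iff_exp_le hpos).mpr (hM ▸ hbig)
      have h1 : t ^ 2 ≤ ρ * δ ^ 2 / 4 * (t ^ 2 * (2 * Real.log t)) := by
        have := mul_le_mul_of_nonneg_left hlt (sq_nonneg t)
        have h2 : t ^ 2 * (2 / (ρ * δ ^ 2)) * (ρ * δ ^ 2 / 2) = t ^ 2 := by
          field_simp
        nlinarith [sq_nonneg t]
      have hAt : 0 ≤ A * t := by
        apply mul_nonneg _ ht0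
        have : 0 < ρ * δ ^ 2 / (2 * Real.exp 1) := by positivity
        rw [hA]; positivity
      nlinarith [h1, hAt]
    · -- t < M : use t log t ≥ -1/e
      have hlb : -(Real.exp 1)⁻¹ ≤ t * Real.log t := mul_log_ge_neg_inv_exp hpos
      have h2 : t ^ 2 ≤ M * t := by nlinarith
      -- A t + (ρδ²/4) t² (2 log t) = M t + (ρδ²/(2e)) t + (ρδ²/2) t (t log t)
      have h3 : ρ * δ ^ 2 / 2 * t * (t * Real.log t) ≥ ρ * δ ^ 2 / 2 * t * (-(Real.exp 1)⁻¹) := by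
        apply mul_le_mul_of_nonneg_left hlb
        positivity
      have h4 : ρ * δ ^ 2 / (2 * Real.exp 1) * t = ρ * δ ^ 2 / 2 * t * (Real.exp 1)⁻¹ := by
        field_simp
      have hAexp : A * t = M * t + ρ * δ ^ 2 / (2 * Real.exp 1) * t := by
        rw [hA, hM]; ring
      nlinarith
  -- integrability
  have hint2 : Integrable (fun ω => ζ ω ^ 2) P := hζ.integrable_sq
  have hint1 : Integrable (fun ω => |ζ ω|) P := (hζ.integrable one_le_two).abs
  have hintR : Integrable
      (fun ω => A * |ζ ω| + ρ * δ ^ 2 / 4 * (ζ ω ^ 2 * Real.log (ζ ω ^ 2))) P :=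
    (hint1.const_mul A).add (hent.const_mul _)
  have key : (1:ℝ) ≤ A * (∫ ω, |ζ ω| ∂P)
      + ρ * δ ^ 2 / 4 * ∫ ω, ζ ω ^ 2 * Real.log (ζ ω ^ 2) ∂P := by
    calc (1:ℝ) = ∫ ω, ζ ω ^ 2 ∂P := hnorm.symm
    _ ≤ ∫ ω, (A * |ζ ω| + ρ * δ ^ 2 / 4 * (ζ ω ^ 2 * Real.log (ζ ω ^ 2))) ∂P :=
        integral_mono hint2 hintR hpt
    _ = A * (∫ ω, |ζ ω| ∂P) + ρ * δ ^ 2 / 4 * ∫ ω, ζ ω ^ 2 * Real.log (ζ ω ^ 2) ∂P := by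
        rw [integral_add (hint1.const_mul A) (hent.const_mul _),
          integral_const_mul, integral_const_mul]
  obtain ⟨x, hx⟩ : ∃ x : ℝ, x = ∫ ω, |ζ ω| ∂P := ⟨_, rfl⟩
  obtain ⟨S, hS⟩ : ∃ S : ℝ, S = ∫ ω, ζ ω ^ 2 * Real.log (ζ ω ^ 2) ∂P := ⟨_, rfl⟩
  rw [← hx, ← hS]
  rw [← hx, ← hS] at key
  nlinarith [sq_nonneg (A * x - 1)]
end

section
/- Let d ≥ 1, c > 0, μ > 0 and 1 ≤ r < d/(d−1). Then the kernel K(x) = e^{−c√μ|x|}/(1+|x|^{d−1}) on ℝ^d satisfies ‖K‖_{L^r(ℝ^d)} ≤ C(d, c, r)·(1 + μ^{−((1−d)r+d)/(2r)}). -/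
open MeasureTheory Set

open scoped NNReal

private lemma stmt6_aux_rpow_add {a b p : ℝ} (ha : 0 ≤ a) (hb : 0 ≤ b)
    (hp : 0 ≤ p) (hp1 : p ≤ 1) : (a + b) ^ p ≤ a ^ p + b ^ p := by
  have h := NNReal.rpow_add_le_add_rpow a.toNNReal b.toNNReal hp hp1
  have hab : ((a.toNNReal + b.toNNReal : ℝ≥0) : ℝ) = a + b := by
    simp [Real.coe_toNNReal _ ha, Real.coe_toNNReal _ hb]
  calc (a + b) ^ p = (((a.toNNReal + b.toNNReal : ℝ≥0) ^ p : ℝ≥0) : ℝ) := by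
        rw [NNReal.coe_rpow, hab]
    _ ≤ ((a.toNNReal ^ p + b.toNNReal ^ p : ℝ≥0) : ℝ) := by exact_mod_cast h
    _ = a ^ p + b ^ p := by
        push_cast [NNReal.coe_rpow]
        rw [Real.coe_toNNReal _ ha, Real.coe_toNNReal _ hb]

set_option maxHeartbeats 1000000 in
/-- For `d ≥ 1`, `c > 0` and `1 ≤ r < d/(d-1)`, the kernel
`K(x) = e^{-c√μ|x|}/(1+|x|^{d-1})` on `ℝ^d` satisfies
`‖K‖_{L^r} ≤ C(d,c,r) (1 + μ^{-((1-d)r+d)/(2r)})` for every `μ > 0`. -/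
theorem stmt6 (d : ℕ) (hd : 1 ≤ d) (c r : ℝ) (hc : 0 < c)
    (hr : 1 ≤ r) (hr' : r < (d : ℝ) / ((d : ℝ) - 1)) :
    ∃ C : ℝ, 0 < C ∧ ∀ μ : ℝ, 0 < μ →
      (∫ x : EuclideanSpace ℝ (Fin d),
          (Real.exp (-c * Real.sqrt μ * ‖x‖) / (1 + ‖x‖ ^ ((d : ℝ) - 1))) ^ r) ^ (1 / r)
        ≤ C * (1 + μ ^ (-(((1 : ℝ) - d) * r + d) / (2 * r))) := by
  have hd2 : 1 < d := by
    rcases lt_or_eq_of_le hd with h | h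
    · exact h
    · exfalso
      rw [← h] at hr'
      norm_num at hr'
      linarith
  have hdR : (2 : ℝ) ≤ (d : ℝ) := by exact_mod_cast hd2
  have hdm1 : (0 : ℝ) < (d : ℝ) - 1 := by linarith
  have hr0 : (0 : ℝ) < r := by linarith
  set β : ℝ := ((1 : ℝ) - d) * r + d with hβdef
  have hβ : 0 < β := by
    have h1 := (lt_div_iff₀ hdm1).mp hr'
    nlinarith
  haveI : Nonempty (Fin d) := ⟨⟨0, by omega⟩⟩
  haveI : Nontrivial (EuclideanSpace ℝ (Fin d)) := inferInstance
  set V : ℝ := (volume (Metric.ball (0 : EuclideanSpace ℝ (Fin d)) 1)).toReal with hVdef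
  have hV0 : 0 ≤ V := ENNReal.toReal_nonneg
  set K : ℝ := (1 / (c * r)) ^ β * Real.Gamma β with hKdef
  have hK0 : 0 ≤ K := by
    have := Real.Gamma_pos_of_pos hβ
    positivity
  set A : ℝ := (d : ℝ) * V with hAdef
  have hA0 : 0 ≤ A := by positivity
  set B : ℝ := A * K with hBdef
  have hB0 : 0 ≤ B := mul_nonneg hA0 hK0
  have hexpr : 0 ≤ 1 / r ∧ 1 / r ≤ 1 := ⟨by positivity, by rw [div_le_one hr0]; exact hr⟩
  refine ⟨A ^ (1 / r) + B ^ (1 / r) + 1, by positivity, ?_⟩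
  intro μ hμ
  set a : ℝ := c * Real.sqrt μ with hadef
  have ha : 0 < a := mul_pos hc (Real.sqrt_pos.mpr hμ)
  set f : ℝ → ℝ := fun t => (Real.exp (-c * Real.sqrt μ * t) / (1 + t ^ ((d : ℝ) - 1))) ^ r
    with hfdef
  -- polar coordinates
  have hpolar := MeasureTheory.integral_fun_norm_addHaar
    (volume : Measure (EuclideanSpace ℝ (Fin d))) f
  simp only [finrank_euclideanSpace_fin, smul_eq_mul, nsmul_eq_mul] at hpolar
  set J : ℝ := ∫ y in Ioi (0 : ℝ), y ^ (d - 1) * f y with hJdef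
  set m : ℝ := μ ^ (-β / 2) with hmdef
  have hm0 : 0 < m := Real.rpow_pos_of_pos hμ _
  set h : ℝ → ℝ := fun t =>
    Set.indicator (Ioc (0 : ℝ) 1) (fun _ => (1 : ℝ)) t + t ^ (β - 1) * Real.exp (-(a * r) * t)
    with hhdef
  -- pointwise bounds for the radial integrand
  have hgnonneg : ∀ t : ℝ, t ∈ Ioi (0 : ℝ) → 0 ≤ t ^ (d - 1) * f t := by
    intro t ht
    have ht0 : 0 < t := ht
    have hbase : 0 ≤ Real.exp (-c * Real.sqrt μ * t) / (1 + t ^ ((d : ℝ) - 1)) := by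
      apply div_nonneg (Real.exp_nonneg _)
      have : 0 ≤ t ^ ((d : ℝ) - 1) := Real.rpow_nonneg ht0.le _
      linarith
    exact mul_nonneg (pow_nonneg ht0.le _) (Real.rpow_nonneg hbase _)
  have hgh : ∀ t : ℝ, t ∈ Ioi (0 : ℝ) → t ^ (d - 1) * f t ≤ h t := by
    intro t ht
    have ht0 : 0 < t := ht
    have htpow : 0 ≤ t ^ ((d : ℝ) - 1) := Real.rpow_nonneg ht0.le _
    have hden : (1 : ℝ) ≤ 1 + t ^ ((d : ℝ) - 1) := by linarith
    have hexp : Real.exp (-c * Real.sqrt μ * t) ^ r = Real.exp (-(a * r) * t) := by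
      rw [← Real.exp_mul]
      congr 1
      rw [hadef]; ring
    rcases le_or_gt t 1 with ht1 | ht1
    · -- near part
      have hmem : t ∈ Ioc (0 : ℝ) 1 := ⟨ht0, ht1⟩
      have hind : h t = 1 + t ^ (β - 1) * Real.exp (-(a * r) * t) := by
        simp [hhdef, Set.indicator_of_mem hmem]
      have hsecond : 0 ≤ t ^ (β - 1) * Real.exp (-(a * r) * t) :=
        mul_nonneg (Real.rpow_nonneg ht0.le _) (Real.exp_nonneg _)
      have hft : f t ≤ 1 := by
        apply Real.rpow_le_one _ _ hr0.le
        · apply div_nonneg (Real.exp_nonneg _); linarith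
        · rw [div_le_one (by linarith)]
          calc Real.exp (-c * Real.sqrt μ * t) ≤ 1 := by
                apply Real.exp_le_one_iff.mpr
                have h0 : 0 ≤ c * Real.sqrt μ * t := by
                  have := Real.sqrt_nonneg μ
                  positivity
                nlinarith
            _ ≤ 1 + t ^ ((d : ℝ) - 1) := hden
      have htp : t ^ (d - 1) ≤ 1 := pow_le_one₀ ht0.le ht1
      have hkey : t ^ (d - 1) * f t ≤ 1 := by
        calc t ^ (d - 1) * f t ≤ 1 * 1 := by
              apply mul_le_mul htp hft _ zero_le_one
              apply Real.rpow_nonneg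
              apply div_nonneg (Real.exp_nonneg _); linarith
          _ = 1 := by norm_num
      rw [hind]; linarith
    · -- far part
      have hmem : t ∉ Ioc (0 : ℝ) 1 := fun hmem => absurd hmem.2 (not_le.mpr ht1)
      have hind : h t = t ^ (β - 1) * Real.exp (-(a * r) * t) := by
        simp [hhdef, Set.indicator_of_notMem hmem]
      rw [hind]
      have hnat : (t : ℝ) ^ (d - 1) = t ^ ((d : ℝ) - 1) := by
        rw [← Real.rpow_natCast t (d - 1)]
        congr 1
        rw [Nat.cast_sub hd, Nat.cast_one]
      have hkey : f t ≤ Real.exp (-(a * r) * t) / t ^ (((d : ℝ) - 1) * r) := by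
        have hfeq : f t = Real.exp (-(a * r) * t) / (1 + t ^ ((d : ℝ) - 1)) ^ r := by
          show (Real.exp (-c * Real.sqrt μ * t) / (1 + t ^ ((d : ℝ) - 1))) ^ r = _
          rw [Real.div_rpow (Real.exp_nonneg _) (by linarith), hexp]
        rw [hfeq]
        have hpow : t ^ (((d : ℝ) - 1) * r) ≤ (1 + t ^ ((d : ℝ) - 1)) ^ r := by
          rw [Real.rpow_mul ht0.le]
          exact Real.rpow_le_rpow htpow (by linarith) hr0.le
        have hpos : 0 < t ^ (((d : ℝ) - 1) * r) := Real.rpow_pos_of_pos ht0 _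
        gcongr
      calc t ^ (d - 1) * f t
          ≤ t ^ ((d : ℝ) - 1) * (Real.exp (-(a * r) * t) / t ^ (((d : ℝ) - 1) * r)) := by
            rw [hnat]
            exact mul_le_mul_of_nonneg_left hkey htpow
        _ = t ^ (β - 1) * Real.exp (-(a * r) * t) := by
            rw [div_eq_mul_inv, ← Real.rpow_neg ht0.le, mul_comm (Real.exp _) _,
              ← mul_assoc, ← Real.rpow_add ht0]
            congr 2
            rw [hβdef]; ring
  -- integrability of the majorant
  have hh1 : Integrable (Set.indicator (Ioc (0 : ℝ) 1) (fun _ => (1 : ℝ)))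
      (volume.restrict (Ioi (0 : ℝ))) := by
    apply Integrable.integrableOn
    rw [integrable_indicator_iff measurableSet_Ioc]
    exact integrableOn_const measure_Ioc_lt_top.ne
  have hh2 : IntegrableOn (fun t : ℝ => t ^ (β - 1) * Real.exp (-(a * r) * t))
      (Ioi (0 : ℝ)) := by
    have h2 := integrableOn_rpow_mul_exp_neg_mul_rpow
      (show (-1 : ℝ) < β - 1 by linarith) (zero_lt_one' ℝ) (show 0 < a * r by positivity)
    apply h2.congr_fun ?_ measurableSet_Ioi
    intro x hx
    simp [Real.rpow_one]
  have hhint : IntegrableOn h (Ioi (0 : ℝ)) := hh1.add hh2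
  -- measurability of the radial integrand
  have hgc : ContinuousOn (fun t : ℝ => t ^ (d - 1) * f t) (Ioi (0 : ℝ)) := by
    rw [hfdef]
    apply ContinuousOn.mul (continuous_pow (d - 1)).continuousOn
    apply ContinuousOn.rpow_const
    · apply ContinuousOn.div
      · exact (Real.continuous_exp.comp (continuous_const.mul continuous_id)).continuousOn
      · exact continuous_const.continuousOn.add
          (continuousOn_id.rpow_const (fun x hx => Or.inl (ne_of_gt hx)))
      · intro x hx
        have h0 : (0 : ℝ) ≤ x ^ ((d : ℝ) - 1) := Real.rpow_nonneg (le_of_lt hx) _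
        exact ne_of_gt (by linarith)
    · intro x hx
      exact Or.inr hr0.le
  have hgam : AEStronglyMeasurable (fun t : ℝ => t ^ (d - 1) * f t)
      (volume.restrict (Ioi (0 : ℝ))) :=
    hgc.aestronglyMeasurable measurableSet_Ioi
  have hgint : IntegrableOn (fun t : ℝ => t ^ (d - 1) * f t) (Ioi (0 : ℝ)) := by
    apply Integrable.mono' hhint hgam
    filter_upwards [ae_restrict_mem measurableSet_Ioi] with t ht
    rw [Real.norm_eq_abs, abs_of_nonneg (hgnonneg t ht)]
    exact hgh t ht
  have hJle : J ≤ ∫ t in Ioi (0 : ℝ), h t := by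
    rw [hJdef]
    exact setIntegral_mono_on hgint hhint measurableSet_Ioi hgh
  -- value of the majorant integral
  have hint : ∫ t in Ioi (0 : ℝ), h t = 1 + (1 / (a * r)) ^ β * Real.Gamma β := by
    rw [hhdef]
    rw [integral_add hh1 hh2]
    congr 1
    · rw [integral_indicator measurableSet_Ioc, Measure.restrict_restrict measurableSet_Ioc,
        Set.inter_eq_self_of_subset_left Ioc_subset_Ioi_self, setIntegral_const]
      simp [Real.volume_Ioc]
    · have h2 := Real.integral_rpow_mul_exp_neg_mul_Ioi hβ (show 0 < a * r by positivity)
      simp only [neg_mul]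
      exact h2
  have hsqrt : (Real.sqrt μ)⁻¹ ^ β = μ ^ (-β / 2) := by
    rw [Real.sqrt_eq_rpow, ← Real.rpow_neg hμ.le, ← Real.rpow_mul hμ.le]
    congr 1
    ring
  have hfactor : (1 / (a * r)) ^ β = (1 / (c * r)) ^ β * m := by
    have h1 : (1 : ℝ) / (a * r) = (1 / (c * r)) * (Real.sqrt μ)⁻¹ := by
      rw [hadef]
      have hs : Real.sqrt μ ≠ 0 := (Real.sqrt_pos.mpr hμ).ne'
      field_simp
    rw [h1, Real.mul_rpow (by positivity) (by positivity), hsqrt, hmdef]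
  have hJfin : J ≤ 1 + K * m := by
    calc J ≤ ∫ t in Ioi (0 : ℝ), h t := hJle
      _ = 1 + (1 / (a * r)) ^ β * Real.Gamma β := hint
      _ = 1 + K * m := by rw [hfactor, hKdef]; ring
  -- assemble
  have hI0 : 0 ≤ ∫ x : EuclideanSpace ℝ (Fin d),
      (Real.exp (-c * Real.sqrt μ * ‖x‖) / (1 + ‖x‖ ^ ((d : ℝ) - 1))) ^ r := by
    apply integral_nonneg
    intro x
    apply Real.rpow_nonneg
    apply div_nonneg (Real.exp_nonneg _)
    have : 0 ≤ ‖x‖ ^ ((d : ℝ) - 1) := Real.rpow_nonneg (norm_nonneg _) _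
    linarith
  have hIle : (∫ x : EuclideanSpace ℝ (Fin d),
      (Real.exp (-c * Real.sqrt μ * ‖x‖) / (1 + ‖x‖ ^ ((d : ℝ) - 1))) ^ r) ≤ A + B * m := by
    have heq0 : (∫ x : EuclideanSpace ℝ (Fin d),
        (Real.exp (-c * Real.sqrt μ * ‖x‖) / (1 + ‖x‖ ^ ((d : ℝ) - 1))) ^ r)
        = ∫ x : EuclideanSpace ℝ (Fin d), f ‖x‖ := by
      simp only [hfdef]
    rw [heq0, hpolar, measureReal_def, ← hVdef]
    calc (d : ℝ) * (V * J) ≤ (d : ℝ) * (V * (1 + K * m)) := by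
          apply mul_le_mul_of_nonneg_left _ (by positivity)
          exact mul_le_mul_of_nonneg_left hJfin hV0
      _ = A + B * m := by rw [hAdef, hBdef]; ring
  have hmono : (∫ x : EuclideanSpace ℝ (Fin d),
      (Real.exp (-c * Real.sqrt μ * ‖x‖) / (1 + ‖x‖ ^ ((d : ℝ) - 1))) ^ r) ^ (1 / r)
      ≤ (A + B * m) ^ (1 / r) :=
    Real.rpow_le_rpow hI0 hIle hexpr.1
  have hsub : (A + B * m) ^ (1 / r) ≤ A ^ (1 / r) + (B * m) ^ (1 / r) :=
    stmt6_aux_rpow_add hA0 (by positivity) hexpr.1 hexpr.2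
  have hBm : (B * m) ^ (1 / r) = B ^ (1 / r) * μ ^ (-β / (2 * r)) := by
    rw [Real.mul_rpow hB0 hm0.le, hmdef, ← Real.rpow_mul hμ.le]
    congr 2
    field_simp
  have hμpos : 0 < μ ^ (-β / (2 * r)) := Real.rpow_pos_of_pos hμ _
  have hArp : 0 ≤ A ^ (1 / r) := Real.rpow_nonneg hA0 _
  have hBrp : 0 ≤ B ^ (1 / r) := Real.rpow_nonneg hB0 _
  calc (∫ x : EuclideanSpace ℝ (Fin d),
      (Real.exp (-c * Real.sqrt μ * ‖x‖) / (1 + ‖x‖ ^ ((d : ℝ) - 1))) ^ r) ^ (1 / r)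
      ≤ (A + B * m) ^ (1 / r) := hmono
    _ ≤ A ^ (1 / r) + (B * m) ^ (1 / r) := hsub
    _ = A ^ (1 / r) + B ^ (1 / r) * μ ^ (-β / (2 * r)) := by rw [hBm]
    _ ≤ (A ^ (1 / r) + B ^ (1 / r) + 1) * (1 + μ ^ (-β / (2 * r))) := by nlinarith
end
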